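/- Rectification is weight-preserving and injective: for a composition α and the composed rectification algorithm R_α, if R_α(D) ≠ 0 then wt(R_α(D)) = wt(D), and if R_α(D) = R_α(D') ≠ 0 then D = D'. -/

import Mathlib

open scoped Classical

/-- A Kohnert move: take the rightmost cell of row `r` and move it down in its
column to the highest open row `r'` below (rows indexed from 1). Cells are `(row, column)`. -/
def KohnertMove (D D' : Finset (ℕ × ℕ)) : Prop :=
  ∃ r c r', (r, c) ∈ D ∧ (∀ c', (r, c') ∈ D → c' ≤ c) ∧
    1 ≤ r' ∧ r' < r ∧ (r', c) ∉ D ∧ (∀ r'', r' < r'' → r'' < r → (r'', c) ∈ D) ∧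
    D' = insert (r', c) (D.erase (r, c))

/-- The largest part of a weak composition. -/
def maxPart (a : List ℕ) : ℕ := a.foldr max 0

/-- Number of cells of a diagram in row `i`. -/
def rowWeight (D : Finset (ℕ × ℕ)) (i : ℕ) : ℕ :=
  (D.filter (fun p => p.1 = i)).card

/-- The weight of a diagram, as a finitely supported function recording the
number of cells in each row. -/
noncomputable def wtF (D : Finset (ℕ × ℕ)) : ℕ →₀ ℕ := ∑ p ∈ D, Finsupp.single p.1 1

/-- The exponent vector `x^a` of a weak composition `a` (1-based variables). -/
noncomputable def compFinsupp (a : List ℕ) : ℕ →₀ ℕ :=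
  ∑ i ∈ Finset.range a.length, Finsupp.single (i + 1) (a.getD i 0)

/-- The boxes matched by a partial matching. -/
def matchedBoxes (M : Finset ((ℕ × ℕ) × (ℕ × ℕ))) : Finset (ℕ × ℕ) :=
  M.image Prod.fst ∪ M.image Prod.snd

/-- Initial vertical `i`-pairing: pair any boxes of rows `i` and `i+1` in the
same column. -/
def vInit (i : ℕ) (D : Finset (ℕ × ℕ)) : Finset ((ℕ × ℕ) × (ℕ × ℕ)) :=
  (D.filter (fun p => p.1 = i + 1 ∧ (i, p.2) ∈ D)).image (fun p => (p, (i, p.2)))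

/-- One step of the iterative vertical `i`-pairing: pair an unpaired box of row
`i+1` with the rightmost unpaired box of row `i` in a column to its left,
provided all boxes of rows `i`, `i+1` in the columns strictly between them are
already paired. -/
def VStep (i : ℕ) (D : Finset (ℕ × ℕ)) (M M' : Finset ((ℕ × ℕ) × (ℕ × ℕ))) : Prop :=
  ∃ cx cy, (i + 1, cx) ∈ D ∧ (i, cy) ∈ D ∧ cy < cx ∧
    (i + 1, cx) ∉ matchedBoxes M ∧ (i, cy) ∉ matchedBoxes M ∧
    (∀ p ∈ D, (p.1 = i ∨ p.1 = i + 1) → cy < p.2 → p.2 < cx → p ∈ matchedBoxes M) ∧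
    M' = insert ((i + 1, cx), (i, cy)) M

/-- The vertical `i`-pairing of `D`: a matching obtained from the same-column
pairing by iterating `VStep` until no further step applies. -/
def VOutcome (i : ℕ) (D : Finset (ℕ × ℕ)) (M : Finset ((ℕ × ℕ) × (ℕ × ℕ))) : Prop :=
  Relation.ReflTransGen (VStep i D) (vInit i D) M ∧ ∀ M', ¬ VStep i D M M'

/-- The raising operator `e_i` as a relation: `RaiseRel i D D'` holds when `D'`
is obtained from `D` by pushing the rightmost vertically unpaired box of row
`i+1` down to row `i` (`e_i(D) = 0` corresponds to no `D'` existing). -/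
def RaiseRel (i : ℕ) (D D' : Finset (ℕ × ℕ)) : Prop :=
  ∃ M c, VOutcome i D M ∧ (i + 1, c) ∈ D ∧ (i + 1, c) ∉ matchedBoxes M ∧
    (∀ c', (i + 1, c') ∈ D → (i + 1, c') ∉ matchedBoxes M → c' ≤ c) ∧
    D' = insert (i, c) (D.erase (i + 1, c))

/-- Initial horizontal `c`-pairing: pair any boxes of columns `c` and `c+1` in
the same row. Cells are `(row, column)`. -/
def hInit (c : ℕ) (D : Finset (ℕ × ℕ)) : Finset ((ℕ × ℕ) × (ℕ × ℕ)) :=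
  (D.filter (fun p => p.2 = c + 1 ∧ (p.1, c) ∈ D)).image (fun p => (p, (p.1, c)))

/-- One step of the iterative horizontal `c`-pairing: pair an unpaired box of
column `c+1` with the lowest unpaired box of column `c` in a row above it,
provided all boxes of columns `c`, `c+1` in the rows strictly between them are
already paired. -/
def HStep (c : ℕ) (D : Finset (ℕ × ℕ)) (M M' : Finset ((ℕ × ℕ) × (ℕ × ℕ))) : Prop :=
  ∃ rx ry, (rx, c + 1) ∈ D ∧ (ry, c) ∈ D ∧ rx < ry ∧
    (rx, c + 1) ∉ matchedBoxes M ∧ (ry, c) ∉ matchedBoxes M ∧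
    (∀ p ∈ D, (p.2 = c ∨ p.2 = c + 1) → rx < p.1 → p.1 < ry → p ∈ matchedBoxes M) ∧
    M' = insert ((rx, c + 1), (ry, c)) M

/-- The horizontal `c`-pairing of `D`. -/
def HOutcome (c : ℕ) (D : Finset (ℕ × ℕ)) (M : Finset ((ℕ × ℕ) × (ℕ × ℕ))) : Prop :=
  Relation.ReflTransGen (HStep c D) (hInit c D) M ∧ ∀ M', ¬ HStep c D M M'

/-- The rectification operator `𝚎̄_c` as a relation: `RectRel c D D'` holds when
`D'` is obtained from `D` by pushing the bottom-most horizontally unpaired box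
of column `c+1` left to column `c` (`𝚎̄_c(D) = 0` corresponds to no `D'`). -/
def RectRel (c : ℕ) (D D' : Finset (ℕ × ℕ)) : Prop :=
  ∃ M r, HOutcome c D M ∧ (r, c + 1) ∈ D ∧ (r, c + 1) ∉ matchedBoxes M ∧
    (∀ r', (r', c + 1) ∈ D → (r', c + 1) ∉ matchedBoxes M → r ≤ r') ∧
    D' = insert (r, c) (D.erase (r, c + 1))

/-- Composing a list of indexed partial operators (given as relations), applying
the head of the list first. -/
def ChainRel (R : ℕ → Finset (ℕ × ℕ) → Finset (ℕ × ℕ) → Prop) :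
    List ℕ → Finset (ℕ × ℕ) → Finset (ℕ × ℕ) → Prop
  | [], D, D' => D' = D
  | c :: cs, D, D' => ∃ E, R c D E ∧ ChainRel R cs E D'

/-- The steps (in order of application) of
`R_{α,i} = (𝚎̄_{α_i}∘⋯∘𝚎̄_{m-1})∘⋯∘(𝚎̄_1∘⋯∘𝚎̄_{m-α_i})`, where `ai = α_i`:
for `k = 1, …, α_i` the block `𝚎̄_{m-α_i+k-1}, …, 𝚎̄_k`. -/
def rectStepsRow (m ai : ℕ) : List ℕ :=
  (List.range ai).foldr (fun k acc => (List.range' (k + 1) (m - ai)).reverse ++ acc) []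

/-- The steps (in order of application) of `R_α = R_{α,ℓ(α)}∘⋯∘R_{α,1}`. -/
def rectSteps (α : List ℕ) : List ℕ :=
  (List.range α.length).foldr (fun j acc => rectStepsRow (maxPart α) (α.getD j 0) ++ acc) []

/-- The Rectification algorithm `R_α` as a relation on diagrams. -/
def RalgRel (α : List ℕ) : Finset (ℕ × ℕ) → Finset (ℕ × ℕ) → Prop :=
  ChainRel RectRel (rectSteps α)

namespace RectAux


/-- Number of cells of `X` in column `d` with row in `(a, b]`. -/
noncomputable def cntC (X : Finset (ℕ × ℕ)) (d a b : ℕ) : ℕ :=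
  (X.filter (fun p => p.2 = d ∧ a < p.1 ∧ p.1 ≤ b)).card

lemma cntC_zero (X : Finset (ℕ × ℕ)) (d : ℕ) {a b : ℕ} (h : b ≤ a) : cntC X d a b = 0 := by
  unfold cntC
  rw [Finset.card_eq_zero, Finset.filter_eq_empty_iff]
  rintro p _ ⟨_, h1, h2⟩
  omega

lemma cntC_top {X : Finset (ℕ × ℕ)} {a : ℕ} (hT : ∀ p ∈ X, p.1 ≤ a) (d b : ℕ) :
    cntC X d a b = 0 := by
  unfold cntC
  rw [Finset.card_eq_zero, Finset.filter_eq_empty_iff]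
  rintro p hp ⟨_, h1, _⟩
  exact absurd (hT p hp) (by omega)

lemma cntC_succ (X : Finset (ℕ × ℕ)) (d : ℕ) {a b : ℕ} (h : a < b) :
    cntC X d a b = (if (a + 1, d) ∈ X then 1 else 0) + cntC X d (a + 1) b := by
  unfold cntC
  have hsplit : X.filter (fun p => p.2 = d ∧ a < p.1 ∧ p.1 ≤ b)
      = X.filter (fun p => p = (a + 1, d)) ∪
        X.filter (fun p => p.2 = d ∧ a + 1 < p.1 ∧ p.1 ≤ b) := by
    ext p
    simp only [Finset.mem_filter, Finset.mem_union]
    constructor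
    · rintro ⟨hp, hd2, h1, h2⟩
      by_cases hq : p.1 = a + 1
      · exact Or.inl ⟨hp, Prod.ext_iff.mpr ⟨hq, hd2⟩⟩
      · exact Or.inr ⟨hp, hd2, by omega, h2⟩
    · rintro (⟨hp, rfl⟩ | ⟨hp, h2, h3, h4⟩)
      · exact ⟨hp, rfl, by omega, by omega⟩
      · exact ⟨hp, h2, by omega, h4⟩
  rw [hsplit, Finset.card_union_of_disjoint, Finset.filter_eq']
  · split_ifs <;> simp
  · rw [Finset.disjoint_left]
    rintro p hp hq
    rw [Finset.mem_filter] at hp hq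
    rcases hp with ⟨_, rfl⟩
    rcases hq with ⟨_, _, h3, _⟩
    omega

lemma cntC_congr {X Y : Finset (ℕ × ℕ)} {a : ℕ}
    (h : ∀ p : ℕ × ℕ, a < p.1 → (p ∈ X ↔ p ∈ Y)) (d b : ℕ) :
    cntC X d a b = cntC Y d a b := by
  unfold cntC
  congr 1
  ext p
  simp only [Finset.mem_filter]
  constructor
  · rintro ⟨hp, h1, h2, h3⟩; exact ⟨(h p h2).mp hp, h1, h2, h3⟩
  · rintro ⟨hp, h1, h2, h3⟩; exact ⟨(h p h2).mpr hp, h1, h2, h3⟩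

/-- The greedy (top-down) counter of unmatched column-`c` boxes: `ctr X c T k`
is the number of available opens after processing rows `> T - k`. -/
noncomputable def ctr (X : Finset (ℕ × ℕ)) (c T : ℕ) : ℕ → ℕ
  | 0 => 0
  | k + 1 => (ctr X c T k + (if (T - k, c) ∈ X then 1 else 0))
      - (if (T - k, c + 1) ∈ X then 1 else 0)

lemma ctr_row {X : Finset (ℕ × ℕ)} {c T u : ℕ} (hu : u ≤ T) :
    ctr X c T ((T - u) + 1)
      = (ctr X c T (T - u) + (if (u, c) ∈ X then 1 else 0))
        - (if (u, c + 1) ∈ X then 1 else 0) := by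
  simp only [ctr]
  rw [Nat.sub_sub_self hu]

lemma ctr_bound {X : Finset (ℕ × ℕ)} {c T : ℕ} (hT : ∀ p ∈ X, p.1 ≤ T) :
    ∀ k, k ≤ T → ∀ s, cntC X c (T - k) s ≤ cntC X (c + 1) (T - k) s + ctr X c T k := by
  intro k
  induction k with
  | zero =>
    intro _ s
    simp only [Nat.sub_zero]
    rw [cntC_top hT]
    exact Nat.zero_le _
  | succ k ih =>
    intro hk s
    have hk' : k ≤ T := by omega
    have ht : T - k = (T - (k + 1)) + 1 := by omega
    rcases le_or_gt s (T - (k + 1)) with hs | hs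
    · rw [cntC_zero _ _ hs]
      exact Nat.zero_le _
    · have e1 := cntC_succ X c hs
      have e2 := cntC_succ X (c + 1) hs
      have IH := ih hk' s
      rw [ht] at IH
      simp only [ctr, ht]
      rw [e1, e2]
      split_ifs at e1 e2 ⊢ <;> omega

lemma ctr_wit {X : Finset (ℕ × ℕ)} {c T : ℕ} (hT : ∀ p ∈ X, p.1 ≤ T) :
    ∀ k, k ≤ T → ∃ s, cntC X (c + 1) (T - k) s + ctr X c T k ≤ cntC X c (T - k) s := by
  intro k
  induction k with
  | zero =>
    intro _
    refine ⟨0, ?_⟩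
    rw [cntC_zero _ _ (Nat.zero_le _)]
    simp [ctr]
  | succ k ih =>
    intro hk
    by_cases hzero : ctr X c T (k + 1) = 0
    · refine ⟨0, ?_⟩
      rw [cntC_zero _ _ (Nat.zero_le _), hzero]
      simp
    · have hk' : k ≤ T := by omega
      obtain ⟨s, hs⟩ := ih hk'
      have ht : T - k = (T - (k + 1)) + 1 := by omega
      set t := T - (k + 1) with htdef
      rw [ht] at hs
      refine ⟨max s (t + 1), ?_⟩
      have hs' : cntC X (c + 1) (t + 1) (max s (t + 1)) + ctr X c T k
          ≤ cntC X c (t + 1) (max s (t + 1)) := by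
        rcases le_or_gt (t + 1) s with hle | hlt
        · rwa [max_eq_left hle]
        · have h1 : cntC X (c + 1) (t + 1) s = 0 := cntC_zero _ _ (by omega)
          have h2 : cntC X c (t + 1) s = 0 := cntC_zero _ _ (by omega)
          rw [h1, h2] at hs
          rw [max_eq_right (by omega)]
          rw [cntC_zero _ _ (le_refl _), cntC_zero _ _ (le_refl _)]
          omega
      have hmax : t < max s (t + 1) := by
        have := le_max_right s (t + 1); omega
      rw [cntC_succ X (c + 1) hmax, cntC_succ X c hmax]
      simp only [ctr, ht] at hzero ⊢
      split_ifs at hzero hs' ⊢ <;> omega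

lemma ctr_eq_zero {X : Finset (ℕ × ℕ)} {c T k : ℕ} (hT : ∀ p ∈ X, p.1 ≤ T) (hk : k ≤ T)
    (h : ∀ s, cntC X c (T - k) s ≤ cntC X (c + 1) (T - k) s) : ctr X c T k = 0 := by
  obtain ⟨s, hs⟩ := ctr_wit (c := c) hT k hk
  have := h s
  omega


/-- Key arithmetic uniqueness: the moved row is determined by the image diagram. -/
lemma no_two (X E : Finset (ℕ × ℕ)) (c r₁ r₂ : ℕ) (hr : r₁ < r₂)
    (hE : E = insert (r₂, c) (X.erase (r₂, c + 1)))
    (hx2 : (r₂, c + 1) ∈ X) (hxo : (r₂, c) ∉ X)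
    (hdef2 : ∀ s, cntC X c r₂ s ≤ cntC X (c + 1) r₂ s)
    (hmin2 : ∀ t, r₁ < t → t < r₂ → (t, c + 1) ∈ X →
      ∃ s, cntC X (c + 1) t s < (if (t, c) ∈ X then 1 else 0) + cntC X c t s)
    (hdef1 : ∀ s, cntC E c r₁ s ≤ cntC E (c + 1) r₁ s) : False := by
  set T := r₂ + X.sup (fun p => p.1) with hTdef
  have hTX : ∀ p ∈ X, p.1 ≤ T := by
    intro p hp
    have h : p.1 ≤ X.sup (fun p => p.1) := Finset.le_sup hp
    omega
  have hr₂T : r₂ ≤ T := by omega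
  have hTE : ∀ p ∈ E, p.1 ≤ T := by
    intro p hp
    rw [hE, Finset.mem_insert] at hp
    rcases hp with rfl | hp
    · exact hr₂T
    · exact hTX p (Finset.mem_of_mem_erase hp)
  have hEX : ∀ p : ℕ × ℕ, p.1 ≠ r₂ → (p ∈ E ↔ p ∈ X) := by
    intro p hp
    rw [hE, Finset.mem_insert, Finset.mem_erase]
    constructor
    · rintro (rfl | ⟨_, h⟩)
      · exact absurd rfl hp
      · exact h
    · intro h
      exact Or.inr ⟨fun he => hp (by rw [he]), h⟩
  have hEc : (r₂, c) ∈ E := by rw [hE]; exact Finset.mem_insert_self _ _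
  have hEc1 : (r₂, c + 1) ∉ E := by
    rw [hE, Finset.mem_insert]
    rintro (h | h)
    · exact absurd (Prod.ext_iff.mp h).2 (by omega)
    · exact absurd h (Finset.notMem_erase _ _)
  -- both counters vanish at r₂
  have h0X : ctr X c T (T - r₂) = 0 :=
    ctr_eq_zero hTX (by omega) (by rw [Nat.sub_sub_self hr₂T]; exact hdef2)
  have hcongr₂ : ∀ p : ℕ × ℕ, r₂ < p.1 → (p ∈ E ↔ p ∈ X) :=
    fun p hp => hEX p (by omega)
  have h0E : ctr E c T (T - r₂) = 0 :=
    ctr_eq_zero hTE (by omega)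
      (by rw [Nat.sub_sub_self hr₂T]
          intro s
          rw [cntC_congr hcongr₂, cntC_congr hcongr₂]
          exact hdef2 s)
  have main : ∀ d, r₁ + d ≤ r₂ - 1 →
      ctr E c T (T - (r₂ - 1 - d)) = ctr X c T (T - (r₂ - 1 - d)) + 1 := by
    intro d
    induction d with
    | zero =>
      intro _
      have ht : T - (r₂ - 1 - 0) = (T - r₂) + 1 := by omega
      rw [ht, ctr_row hr₂T, ctr_row hr₂T, h0X, h0E]
      rw [if_pos hEc, if_neg hEc1, if_neg hxo, if_pos hx2]
    | succ d ih =>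
      intro hd
      have IH := ih (by omega)
      set u := r₂ - 1 - d with hudef
      have htu : T - (r₂ - 1 - (d + 1)) = (T - u) + 1 := by omega
      have huT : u ≤ T := by omega
      have hur : u ≠ r₂ := by omega
      have hoc : ((u, c) ∈ E) ↔ ((u, c) ∈ X) := hEX _ hur
      have hcc : ((u, c + 1) ∈ E) ↔ ((u, c + 1) ∈ X) := hEX _ hur
      rw [htu, ctr_row huT, ctr_row huT, IH]
      have hoc' : (if (u, c) ∈ E then 1 else 0) = (if (u, c) ∈ X then 1 else 0) := by
        by_cases h : (u, c) ∈ X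
        · rw [if_pos h, if_pos (hoc.mpr h)]
        · rw [if_neg h, if_neg (fun hh => h (hoc.mp hh))]
      have hcc' : (if (u, c + 1) ∈ E then 1 else 0) = (if (u, c + 1) ∈ X then 1 else 0) := by
        by_cases h : (u, c + 1) ∈ X
        · rw [if_pos h, if_pos (hcc.mpr h)]
        · rw [if_neg h, if_neg (fun hh => h (hcc.mp hh))]
      rw [hoc', hcc']
      by_cases hclose : (u, c + 1) ∈ X
      · -- need no flooring: the close at u is matched
        obtain ⟨s, hs⟩ := hmin2 u (by omega) (by omega) hclose
        have hb := ctr_bound (c := c) hTX (T - u) (by omega) s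
        rw [Nat.sub_sub_self huT] at hb
        rw [if_pos hclose]
        split_ifs at hs ⊢ <;> omega
      · rw [if_neg hclose]
        split_ifs <;> omega
  have hfin := main (r₂ - 1 - r₁) (by omega)
  have e : r₂ - 1 - (r₂ - 1 - r₁) = r₁ := by omega
  rw [e] at hfin
  have h0E' : ctr E c T (T - r₁) = 0 :=
    ctr_eq_zero hTE (by omega) (by rw [Nat.sub_sub_self (by omega : r₁ ≤ T)]; exact hdef1)
  omega


/-- Deficiency: the arithmetic characterization of an unmatched box of column `c+1`. -/
def Defc (X : Finset (ℕ × ℕ)) (c r : ℕ) : Prop :=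
  (r, c) ∉ X ∧ ∀ s, cntC X c r s ≤ cntC X (c + 1) r s

/-- Structural invariants of any matching reachable from `hInit` by `HStep`s. -/
structure Valid (c : ℕ) (D : Finset (ℕ × ℕ)) (M : Finset ((ℕ × ℕ) × (ℕ × ℕ))) : Prop where
  init : hInit c D ⊆ M
  shape : ∀ m ∈ M, m.1.2 = c + 1 ∧ m.2.2 = c ∧ m.1 ∈ D ∧ m.2 ∈ D ∧ m.1.1 ≤ m.2.1
  injF : ∀ m ∈ M, ∀ m' ∈ M, m.1 = m'.1 → m = m'
  injS : ∀ m ∈ M, ∀ m' ∈ M, m.2 = m'.2 → m = m'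
  betw : ∀ m ∈ M, ∀ p ∈ D, (p.2 = c ∨ p.2 = c + 1) → m.1.1 < p.1 → p.1 < m.2.1 →
    p ∈ matchedBoxes M
  ncross : ∀ m ∈ M, ∀ m' ∈ M, ¬(m.1.1 < m'.1.1 ∧ m'.1.1 < m.2.1 ∧ m.2.1 < m'.2.1)

lemma mem_matched_fst {M : Finset ((ℕ × ℕ) × (ℕ × ℕ))} {m : (ℕ × ℕ) × (ℕ × ℕ)}
    (hm : m ∈ M) : m.1 ∈ matchedBoxes M :=
  Finset.mem_union_left _ (Finset.mem_image_of_mem _ hm)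

lemma mem_matched_snd {M : Finset ((ℕ × ℕ) × (ℕ × ℕ))} {m : (ℕ × ℕ) × (ℕ × ℕ)}
    (hm : m ∈ M) : m.2 ∈ matchedBoxes M :=
  Finset.mem_union_right _ (Finset.mem_image_of_mem _ hm)

lemma matchedBoxes_mono {M M' : Finset ((ℕ × ℕ) × (ℕ × ℕ))} (h : M ⊆ M') :
    matchedBoxes M ⊆ matchedBoxes M' :=
  Finset.union_subset_union (Finset.image_subset_image h) (Finset.image_subset_image h)

lemma mem_hInit {c : ℕ} {D : Finset (ℕ × ℕ)} {m : (ℕ × ℕ) × (ℕ × ℕ)} :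
    m ∈ hInit c D ↔ ∃ r, (r, c + 1) ∈ D ∧ (r, c) ∈ D ∧ m = ((r, c + 1), (r, c)) := by
  unfold hInit
  simp only [Finset.mem_image, Finset.mem_filter]
  constructor
  · rintro ⟨p, ⟨hpD, hp2, hpc⟩, rfl⟩
    refine ⟨p.1, ?_, hpc, ?_⟩
    · rwa [← hp2, Prod.mk.eta]
    · rw [← hp2, Prod.mk.eta]
  · rintro ⟨r, h1, h2, rfl⟩
    exact ⟨(r, c + 1), ⟨h1, rfl, h2⟩, rfl⟩

lemma hInit_pair {c r : ℕ} {D : Finset (ℕ × ℕ)} (h1 : (r, c + 1) ∈ D) (h2 : (r, c) ∈ D) :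
    ((r, c + 1), (r, c)) ∈ hInit c D :=
  mem_hInit.mpr ⟨r, h1, h2, rfl⟩

lemma valid_init (c : ℕ) (D : Finset (ℕ × ℕ)) : Valid c D (hInit c D) := by
  constructor
  · exact Finset.Subset.refl _
  · intro m hm
    obtain ⟨r, h1, h2, rfl⟩ := mem_hInit.mp hm
    exact ⟨rfl, rfl, h1, h2, le_refl _⟩
  · intro m hm m' hm' he
    obtain ⟨r, _, _, rfl⟩ := mem_hInit.mp hm
    obtain ⟨r', _, _, rfl⟩ := mem_hInit.mp hm'
    have hr : r = r' := by
      have h := congrArg (fun x : ℕ × ℕ => x.1) he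
      simpa using h
    subst hr
    rfl
  · intro m hm m' hm' he
    obtain ⟨r, _, _, rfl⟩ := mem_hInit.mp hm
    obtain ⟨r', _, _, rfl⟩ := mem_hInit.mp hm'
    have hr : r = r' := by
      have h := congrArg (fun x : ℕ × ℕ => x.1) he
      simpa using h
    subst hr
    rfl
  · intro m hm p _ _ h1 h2
    obtain ⟨r, _, _, rfl⟩ := mem_hInit.mp hm
    dsimp only at h1 h2
    omega
  · intro m hm m' hm'
    obtain ⟨r, _, _, rfl⟩ := mem_hInit.mp hm
    obtain ⟨r', _, _, rfl⟩ := mem_hInit.mp hm'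
    rintro ⟨h1, h2, h3⟩
    dsimp only at h1 h2 h3
    omega

lemma valid_step {c : ℕ} {D : Finset (ℕ × ℕ)} {M M' : Finset ((ℕ × ℕ) × (ℕ × ℕ))}
    (hv : Valid c D M) (hs : HStep c D M M') : Valid c D M' := by
  obtain ⟨rx, ry, hx, hy, hlt, hux, huy, hbet, rfl⟩ := hs
  have hsub : M ⊆ insert ((rx, c + 1), (ry, c)) M := Finset.subset_insert _ _
  have hmono := matchedBoxes_mono hsub
  constructor
  · exact hv.init.trans hsub
  · intro m hm
    rcases Finset.mem_insert.mp hm with rfl | hm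
    · exact ⟨rfl, rfl, hx, hy, le_of_lt hlt⟩
    · exact hv.shape m hm
  · intro m hm m' hm' he
    rcases Finset.mem_insert.mp hm with rfl | hm <;>
      rcases Finset.mem_insert.mp hm' with rfl | hm'
    · rfl
    · refine absurd ?_ hux
      have he' : ((rx, c + 1) : ℕ × ℕ) = m'.1 := he
      rw [he']
      exact mem_matched_fst hm'
    · refine absurd ?_ hux
      have he' : m.1 = ((rx, c + 1) : ℕ × ℕ) := he
      rw [← he']
      exact mem_matched_fst hm
    · exact hv.injF m hm m' hm' he
  · intro m hm m' hm' he
    rcases Finset.mem_insert.mp hm with rfl | hm <;>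
      rcases Finset.mem_insert.mp hm' with rfl | hm'
    · rfl
    · refine absurd ?_ huy
      have he' : ((ry, c) : ℕ × ℕ) = m'.2 := he
      rw [he']
      exact mem_matched_snd hm'
    · refine absurd ?_ huy
      have he' : m.2 = ((ry, c) : ℕ × ℕ) := he
      rw [← he']
      exact mem_matched_snd hm
    · exact hv.injS m hm m' hm' he
  · intro m hm p hp hc h1 h2
    rcases Finset.mem_insert.mp hm with rfl | hm
    · exact hmono (hbet p hp hc h1 h2)
    · exact hmono (hv.betw m hm p hp hc h1 h2)
  · intro m hm m' hm'
    rcases Finset.mem_insert.mp hm with rfl | hm <;>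
      rcases Finset.mem_insert.mp hm' with rfl | hm'
    · rintro ⟨h1, _, _⟩
      dsimp only at h1
      omega
    · rintro ⟨_, h2, h3⟩
      exact huy (hv.betw m' hm' (ry, c) hy (Or.inl rfl) h2 h3)
    · rintro ⟨h1, h2, _⟩
      exact hux (hv.betw m hm (rx, c + 1) hx (Or.inr rfl) h1 h2)
    · exact hv.ncross m hm m' hm'

lemma valid_reach {c : ℕ} {D : Finset (ℕ × ℕ)} {M : Finset ((ℕ × ℕ) × (ℕ × ℕ))}
    (h : Relation.ReflTransGen (HStep c D) (hInit c D) M) : Valid c D M := by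
  induction h with
  | refl => exact valid_init c D
  | tail _ hstep ih => exact valid_step ih hstep

lemma partner_snd {c : ℕ} {D : Finset (ℕ × ℕ)} {M : Finset ((ℕ × ℕ) × (ℕ × ℕ))}
    (hv : Valid c D M) {p : ℕ × ℕ} (hp : p ∈ matchedBoxes M) (hc : p.2 = c) :
    ∃ m, m ∈ M ∧ m.2 = p := by
  rcases Finset.mem_union.mp hp with h | h
  · obtain ⟨m, hm, rfl⟩ := Finset.mem_image.mp h
    have h1 := (hv.shape m hm).1
    exact absurd hc (by omega)
  · obtain ⟨m, hm, rfl⟩ := Finset.mem_image.mp h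
    exact ⟨m, hm, rfl⟩

lemma partner_fst {c : ℕ} {D : Finset (ℕ × ℕ)} {M : Finset ((ℕ × ℕ) × (ℕ × ℕ))}
    (hv : Valid c D M) {p : ℕ × ℕ} (hp : p ∈ matchedBoxes M) (hc : p.2 = c + 1) :
    ∃ m, m ∈ M ∧ m.1 = p := by
  rcases Finset.mem_union.mp hp with h | h
  · obtain ⟨m, hm, rfl⟩ := Finset.mem_image.mp h
    exact ⟨m, hm, rfl⟩
  · obtain ⟨m, hm, rfl⟩ := Finset.mem_image.mp h
    have h1 := (hv.shape m hm).2.1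
    exact absurd hc (by omega)

lemma matched_of_both {c r : ℕ} {D : Finset (ℕ × ℕ)} {M : Finset ((ℕ × ℕ) × (ℕ × ℕ))}
    (hv : Valid c D M) (h1 : (r, c + 1) ∈ D) (h2 : (r, c) ∈ D) :
    (r, c + 1) ∈ matchedBoxes M :=
  mem_matched_fst (hv.init (hInit_pair h1 h2))

lemma unmatched_def {c r : ℕ} {D : Finset (ℕ × ℕ)} {M : Finset ((ℕ × ℕ) × (ℕ × ℕ))}
    (ho : HOutcome c D M) (hD : (r, c + 1) ∈ D) (hu : (r, c + 1) ∉ matchedBoxes M) :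
    Defc D c r := by
  have hv := valid_reach ho.1
  have hrc : (r, c) ∉ D := fun h => hu (matched_of_both hv hD h)
  refine ⟨hrc, ?_⟩
  intro s
  by_contra hlt
  push_neg at hlt
  unfold cntC at hlt
  set A := D.filter (fun p => p.2 = c ∧ r < p.1 ∧ p.1 ≤ s) with hA
  set B := D.filter (fun p => p.2 = c + 1 ∧ r < p.1 ∧ p.1 ≤ s) with hB
  have hexists : ∃ p ∈ A, p ∉ matchedBoxes M := by
    by_contra hno
    push_neg at hno
    have hch : ∀ p : ℕ × ℕ, ∃ m, p ∈ A → (m ∈ M ∧ m.2 = p) := by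
      intro p
      by_cases hp : p ∈ A
      · have hpc : p.2 = c := (Finset.mem_filter.mp hp).2.1
        obtain ⟨m, hm1, hm2⟩ := partner_snd hv (hno p hp) hpc
        exact ⟨m, fun _ => ⟨hm1, hm2⟩⟩
      · exact ⟨((0, 0), (0, 0)), fun h => absurd h hp⟩
    choose g hg using hch
    have hcard : A.card ≤ B.card := by
      apply Finset.card_le_card_of_injOn (fun p => (g p).1)
      · intro p hp
        obtain ⟨hgM, hgp⟩ := hg p hp
        have hsh := hv.shape _ hgM
        have hpA := Finset.mem_filter.mp hp
        obtain ⟨hpc, hp1, hp2⟩ := hpA.2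
        have hle : (g p).1.1 ≤ p.1 := by
          have := hsh.2.2.2.2
          rwa [hgp] at this
        have hgt : r < (g p).1.1 := by
          by_contra hle'
          push_neg at hle'
          rcases eq_or_lt_of_le hle' with heq | hlt'
          · have hfst : (g p).1 = (r, c + 1) := Prod.ext_iff.mpr ⟨heq, hsh.1⟩
            exact hu (hfst ▸ mem_matched_fst hgM)
          · refine hu (hv.betw _ hgM (r, c + 1) hD (Or.inr rfl) hlt' ?_)
            rw [hgp]
            exact hp1
        exact Finset.mem_filter.mpr ⟨hsh.2.2.1, hsh.1, hgt, le_trans hle hp2⟩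
      · intro p hp p' hp' he
        have h1 := hg p hp
        have h2 := hg p' hp'
        have heq := hv.injF _ h1.1 _ h2.1 he
        rw [← h1.2, ← h2.2, heq]
    omega
  obtain ⟨p₀, hp₀A, hp₀u⟩ := hexists
  classical
  set Uo := A.filter (fun p => p ∉ matchedBoxes M) with hUo
  have hUone : (Uo.image Prod.fst).Nonempty :=
    ⟨p₀.1, Finset.mem_image_of_mem _ (Finset.mem_filter.mpr ⟨hp₀A, hp₀u⟩)⟩
  set ry := (Uo.image Prod.fst).min' hUone with hry
  obtain ⟨q, hqUo, hq1⟩ := Finset.mem_image.mp ((Uo.image Prod.fst).min'_mem hUone)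
  rw [← hry] at hq1
  have hqA := (Finset.mem_filter.mp hqUo).1
  have hqu := (Finset.mem_filter.mp hqUo).2
  have hqD : q ∈ D := (Finset.mem_filter.mp hqA).1
  obtain ⟨hqc, hqr, hqs⟩ := (Finset.mem_filter.mp hqA).2
  have hqeq : q = (ry, c) := Prod.ext_iff.mpr ⟨hq1, hqc⟩
  have hryD : (ry, c) ∈ D := hqeq ▸ hqD
  have hryu : (ry, c) ∉ matchedBoxes M := hqeq ▸ hqu
  have hrry : r < ry := by omega
  have hrys : ry ≤ s := by omega
  set Uc := D.filter (fun p => p.2 = c + 1 ∧ r ≤ p.1 ∧ p.1 < ry ∧ p ∉ matchedBoxes M) with hUc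
  have hrUc : (r, c + 1) ∈ Uc := Finset.mem_filter.mpr ⟨hD, rfl, le_refl _, hrry, hu⟩
  have hUcne : (Uc.image Prod.fst).Nonempty := ⟨r, Finset.mem_image_of_mem _ hrUc⟩
  set rx := (Uc.image Prod.fst).max' hUcne with hrx
  obtain ⟨q', hq'Uc, hq'1⟩ := Finset.mem_image.mp ((Uc.image Prod.fst).max'_mem hUcne)
  rw [← hrx] at hq'1
  have hq'D : q' ∈ D := (Finset.mem_filter.mp hq'Uc).1
  obtain ⟨hq'c, hq'r, hq'ry, hq'u⟩ := (Finset.mem_filter.mp hq'Uc).2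
  have hq'eq : q' = (rx, c + 1) := Prod.ext_iff.mpr ⟨hq'1, hq'c⟩
  have hrxD : (rx, c + 1) ∈ D := hq'eq ▸ hq'D
  have hrxu : (rx, c + 1) ∉ matchedBoxes M := hq'eq ▸ hq'u
  have hrxry : rx < ry := by omega
  have hrrx : r ≤ rx := Finset.le_max' _ r (Finset.mem_image_of_mem _ hrUc)
  have hbetween : ∀ p ∈ D, (p.2 = c ∨ p.2 = c + 1) → rx < p.1 → p.1 < ry →
      p ∈ matchedBoxes M := by
    intro p hpD hcol h1 h2
    by_contra hpm
    rcases hcol with hcol | hcol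
    · have hpA : p ∈ A := Finset.mem_filter.mpr ⟨hpD, hcol, by omega, by omega⟩
      have : ry ≤ p.1 :=
        Finset.min'_le _ _ (Finset.mem_image_of_mem _ (Finset.mem_filter.mpr ⟨hpA, hpm⟩))
      omega
    · have hpUc : p ∈ Uc := Finset.mem_filter.mpr ⟨hpD, hcol, by omega, h2, hpm⟩
      have : p.1 ≤ rx := Finset.le_max' _ _ (Finset.mem_image_of_mem _ hpUc)
      omega
  exact ho.2 _ ⟨rx, ry, hrxD, hryD, hrxry, hrxu, hryu, hbetween, rfl⟩

lemma matched_not_def {c r : ℕ} {D : Finset (ℕ × ℕ)} {M : Finset ((ℕ × ℕ) × (ℕ × ℕ))}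
    (hv : Valid c D M) (hD : (r, c + 1) ∈ D) (hm : (r, c + 1) ∈ matchedBoxes M)
    (hd : Defc D c r) : False := by
  obtain ⟨m, hmM, hm1⟩ := partner_fst hv hm rfl
  have hsh := hv.shape m hmM
  set ry := m.2.1 with hrydef
  have hm2 : m.2 = (ry, c) := Prod.ext_iff.mpr ⟨rfl, hsh.2.1⟩
  have hrry : r ≤ ry := by
    have h := hsh.2.2.2.2
    rwa [hm1] at h
  have hryD : (ry, c) ∈ D := hm2 ▸ hsh.2.2.2.1
  rcases eq_or_lt_of_le hrry with heq | hlt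
  · exact hd.1 (heq ▸ hryD)
  · classical
    set A := D.filter (fun p => p.2 = c ∧ r < p.1 ∧ p.1 ≤ ry) with hA
    set B := D.filter (fun p => p.2 = c + 1 ∧ r < p.1 ∧ p.1 ≤ ry) with hB
    have hyA : (ry, c) ∈ A := Finset.mem_filter.mpr ⟨hryD, rfl, hlt, le_refl _⟩
    have hblt : ∀ q ∈ B, q.1 < ry := by
      intro q hq
      have hqB := Finset.mem_filter.mp hq
      obtain ⟨hqc, hqr, hqs⟩ := hqB.2
      rcases eq_or_lt_of_le hqs with heq' | h
      · exfalso
        have hqeq : q = (ry, c + 1) := Prod.ext_iff.mpr ⟨heq', hqc⟩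
        have hpair := hv.init (hInit_pair (hqeq ▸ hqB.1) hryD)
        have := hv.injS _ hpair _ hmM (by rw [hm2])
        have hfst : ((ry, c + 1) : ℕ × ℕ) = (r, c + 1) := by
          rw [← hm1, ← this]
        have := (Prod.ext_iff.mp hfst).1
        omega
      · exact h
    have hch : ∀ q : ℕ × ℕ, ∃ mq, q ∈ B → (mq ∈ M ∧ mq.1 = q) := by
      intro q
      by_cases hq : q ∈ B
      · have hqB := Finset.mem_filter.mp hq
        obtain ⟨hqc, hqr, _⟩ := hqB.2
        have hmatched : q ∈ matchedBoxes M := by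
          refine hv.betw m hmM q hqB.1 (Or.inr hqc) ?_ (hblt q hq)
          rw [hm1]
          exact hqr
        obtain ⟨mq, h1, h2⟩ := partner_fst hv hmatched hqc
        exact ⟨mq, fun _ => ⟨h1, h2⟩⟩
      · exact ⟨((0, 0), (0, 0)), fun h => absurd h hq⟩
    choose g hg using hch
    have hcard : B.card ≤ (A.erase (ry, c)).card := by
      apply Finset.card_le_card_of_injOn (fun q => (g q).2)
      · intro q hq
        obtain ⟨hgM, hgq⟩ := hg q hq
        have hshq := hv.shape _ hgM
        have hqB := Finset.mem_filter.mp hq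
        obtain ⟨hqc, hqr, _⟩ := hqB.2
        have hle : q.1 ≤ (g q).2.1 := by
          have h := hshq.2.2.2.2
          rwa [hgq] at h
        have hne : (g q).2.1 ≠ ry := by
          intro he
          have h2 : (g q).2 = (ry, c) := Prod.ext_iff.mpr ⟨he, hshq.2.1⟩
          have heqm := hv.injS _ hgM _ hmM (by rw [h2, hm2])
          have : q = (r, c + 1) := by rw [← hgq, heqm, hm1]
          have := (Prod.ext_iff.mp this).1
          omega
        have hltr : (g q).2.1 < ry := by
          rcases lt_or_gt_of_ne hne with h | h
          · exact h
          · exfalso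
            refine hv.ncross m hmM _ hgM ⟨?_, ?_, h⟩
            · rw [hm1, hgq]
              exact hqr
            · rw [hgq]
              exact hblt q hq
        show (g q).2 ∈ A.erase (ry, c)
        refine Finset.mem_erase.mpr ⟨?_, ?_⟩
        · intro he
          exact hne (by rw [he])
        · exact Finset.mem_filter.mpr ⟨hshq.2.2.2.1, hshq.2.1, by omega, by omega⟩
      · intro q hq q' hq' he
        have h1 := hg q hq
        have h2 := hg q' hq'
        have heq := hv.injS _ h1.1 _ h2.1 he
        rw [← h1.2, ← h2.2, heq]
    have hless : (A.erase (ry, c)).card < A.card := Finset.card_erase_lt_of_mem hyA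
    have hle : A.card ≤ B.card := by
      have h := hd.2 ry
      unfold cntC at h
      exact h
    omega

/-- Full specification extracted from `RectRel`. -/
lemma rectRel_spec {c : ℕ} {D E : Finset (ℕ × ℕ)} (h : RectRel c D E) :
    ∃ r, (r, c + 1) ∈ D ∧ (r, c) ∉ D ∧ Defc D c r ∧
      (∀ t, t < r → (t, c + 1) ∈ D →
        ∃ s, cntC D (c + 1) t s < (if (t, c) ∈ D then 1 else 0) + cntC D c t s) ∧
      E = insert (r, c) (D.erase (r, c + 1)) := by
  obtain ⟨M, r, ho, hD, hu, hmin, hE⟩ := h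
  have hv := valid_reach ho.1
  have hdef := unmatched_def ho hD hu
  refine ⟨r, hD, hdef.1, hdef, ?_, hE⟩
  intro t ht htD
  by_cases htc : (t, c) ∈ D
  · refine ⟨t, ?_⟩
    rw [cntC_zero _ _ (le_refl t), if_pos htc]
    omega
  · have hmatched : (t, c + 1) ∈ matchedBoxes M := by
      by_contra hum
      exact absurd (hmin t htD hum) (by omega)
    have hndef : ¬ Defc D c t := fun hd => matched_not_def hv htD hmatched hd
    unfold Defc at hndef
    push_neg at hndef
    obtain ⟨s, hs⟩ := hndef htc
    exact ⟨s, by rw [if_neg htc]; omega⟩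

lemma rect_reconstruct {c r : ℕ} {D E : Finset (ℕ × ℕ)} (hD : (r, c + 1) ∈ D)
    (hrc : (r, c) ∉ D) (hE : E = insert (r, c) (D.erase (r, c + 1))) :
    D = insert (r, c + 1) (E.erase (r, c)) := by
  have h1 : (r, c) ∉ D.erase (r, c + 1) := fun h => hrc (Finset.mem_of_mem_erase h)
  rw [hE, Finset.erase_insert h1, Finset.insert_erase hD]

lemma rect_transfer {c r : ℕ} {D E : Finset (ℕ × ℕ)}
    (hE : E = insert (r, c) (D.erase (r, c + 1))) :
    ∀ p : ℕ × ℕ, r < p.1 → (p ∈ E ↔ p ∈ D) := by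
  intro p hp
  rw [hE, Finset.mem_insert, Finset.mem_erase]
  constructor
  · rintro (rfl | ⟨_, h⟩)
    · exact absurd hp (by omega)
    · exact h
  · intro h
    refine Or.inr ⟨?_, h⟩
    intro he
    rw [he] at hp
    exact absurd hp (by omega)

lemma rect_inj {c : ℕ} {D₁ D₂ E : Finset (ℕ × ℕ)} (h1 : RectRel c D₁ E)
    (h2 : RectRel c D₂ E) : D₁ = D₂ := by
  obtain ⟨r₁, ha1, ha2, ha3, ha4, ha5⟩ := rectRel_spec h1
  obtain ⟨r₂, hb1, hb2, hb3, hb4, hb5⟩ := rectRel_spec h2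
  have hEd1 : ∀ s, cntC E c r₁ s ≤ cntC E (c + 1) r₁ s := by
    intro s
    rw [cntC_congr (rect_transfer ha5), cntC_congr (rect_transfer ha5)]
    exact ha3.2 s
  have hEd2 : ∀ s, cntC E c r₂ s ≤ cntC E (c + 1) r₂ s := by
    intro s
    rw [cntC_congr (rect_transfer hb5), cntC_congr (rect_transfer hb5)]
    exact hb3.2 s
  have key : r₁ = r₂ := by
    by_contra hne
    rcases Nat.lt_or_ge r₁ r₂ with hlt | hge
    · exact no_two D₂ E c r₁ r₂ hlt hb5 hb1 hb3.1 hb3.2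
        (fun t ht1 ht2 htD => hb4 t ht2 htD) hEd1
    · have hlt : r₂ < r₁ := by omega
      exact no_two D₁ E c r₂ r₁ hlt ha5 ha1 ha3.1 ha3.2
        (fun t ht1 ht2 htD => ha4 t ht2 htD) hEd2
  rw [rect_reconstruct ha1 ha2 ha5, rect_reconstruct hb1 hb2 hb5, key]

lemma rect_wt {c : ℕ} {D E : Finset (ℕ × ℕ)} (h : RectRel c D E) (i : ℕ) :
    rowWeight E i = rowWeight D i := by
  classical
  obtain ⟨r, h1, h2, _, _, h5⟩ := rectRel_spec h
  subst h5
  unfold rowWeight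
  rw [Finset.filter_insert, Finset.filter_erase]
  by_cases hi : r = i
  · rw [if_pos (by simpa using hi)]
    have hmem : (r, c + 1) ∈ D.filter (fun p => p.1 = i) :=
      Finset.mem_filter.mpr ⟨h1, by simpa using hi⟩
    have hnot : (r, c) ∉ (D.filter (fun p => p.1 = i)).erase (r, c + 1) := by
      intro hx
      exact h2 (Finset.mem_filter.mp (Finset.mem_of_mem_erase hx)).1
    rw [Finset.card_insert_of_notMem hnot, Finset.card_erase_of_mem hmem]
    have hpos : 0 < (D.filter (fun p => p.1 = i)).card :=
      Finset.card_pos.mpr ⟨_, hmem⟩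
    omega
  · rw [if_neg (by simpa using hi)]
    have hnot : (r, c + 1) ∉ D.filter (fun p => p.1 = i) := by
      intro hx
      exact hi (by simpa using (Finset.mem_filter.mp hx).2)
    rw [Finset.erase_eq_of_notMem hnot]

lemma chain_wt : ∀ (cs : List ℕ) (D E : Finset (ℕ × ℕ)), ChainRel RectRel cs D E →
    ∀ i, rowWeight E i = rowWeight D i
  | [], D, E, h, i => by rw [h]
  | c :: cs, D, E, ⟨F, h1, h2⟩, i => (chain_wt cs F E h2 i).trans (rect_wt h1 i)

lemma chain_inj : ∀ (cs : List ℕ) (D₁ D₂ E : Finset (ℕ × ℕ)),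
    ChainRel RectRel cs D₁ E → ChainRel RectRel cs D₂ E → D₁ = D₂
  | [], D₁, D₂, E, h1, h2 => h1.symm.trans h2
  | c :: cs, D₁, D₂, E, ⟨F₁, h1, h1'⟩, ⟨F₂, h2, h2'⟩ => by
    have hF := chain_inj cs F₁ F₂ E h1' h2'
    subst hF
    exact rect_inj h1 h2

end RectAux

/-- The Rectification algorithm `R_α` is weight-preserving and injective
(wherever it is nonzero, i.e. wherever the relation holds). -/
theorem rectification_weight_preserving_injective (α : List ℕ) :
    (∀ D D' : Finset (ℕ × ℕ), RalgRel α D D' → ∀ i, rowWeight D' i = rowWeight D i) ∧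
      (∀ D₁ D₂ E : Finset (ℕ × ℕ), RalgRel α D₁ E → RalgRel α D₂ E → D₁ = D₂) := by
  constructor
  · intro D D' h i
    exact RectAux.chain_wt _ D D' h i
  · intro D₁ D₂ E h1 h2
    exact RectAux.chain_inj _ D₁ D₂ E h1 h2
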